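/- With Ψ_ξ and Ψ_η as above, for every 𝔣 ∈ C(X_{Ã}, ℤ) the difference (Ψ_η ∘ Ψ_ξ)(𝔣) − 𝔣 equals 𝔣₀∘σ_{Ã} − 𝔣₀, where 𝔣₀(x̃) = 𝔣(x̃) if x̃₁ = 0 and 𝔣₀(x̃) = 0 otherwise. Consequently Ψ_ξ and Ψ_η induce mutually inverse isomorphisms between the quotient groups H^{Ã} = C(X_{Ã},ℤ)/{g − g∘σ_{Ã}} and H^A = C(X_A,ℤ)/{ξ − ξ∘σ_A}. -/

import Mathlib

/-- One-sided shift space over symbols `{1, …, N}`. -/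
def ShiftSpace (N : ℕ) (A : ℕ → ℕ → ℕ) : Set (ℕ → ℕ) :=
  {x | (∀ n, 1 ≤ x n ∧ x n ≤ N) ∧ ∀ n, A (x n) (x (n + 1)) = 1}

/-- One-sided shift space over symbols `{0, 1, …, N}`. -/
def ShiftSpace0 (N : ℕ) (A : ℕ → ℕ → ℕ) : Set (ℕ → ℕ) :=
  {x | (∀ n, x n ≤ N) ∧ ∀ n, A (x n) (x (n + 1)) = 1}

/-- The shift on raw sequences. -/
def rawShift (x : ℕ → ℕ) : ℕ → ℕ := fun n => x (n + 1)

/-- The expansion `Ã` of the matrix `A` at the vertex `1`, over the symbol set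
`{0, 1, …, N}`: `Ã(1,0) = 1`, `Ã(1,j) = 0` for `j ≥ 1`; `Ã(0,0) = 0`,
`Ã(0,j) = A(1,j)` for `j ≥ 1`; `Ã(i,0) = 0`, `Ã(i,j) = A(i,j)` for `i ≥ 2`. -/
def expandAt1 (A : ℕ → ℕ → ℕ) : ℕ → ℕ → ℕ := fun i j =>
  if i = 1 then (if j = 0 then 1 else 0)
  else if i = 0 then (if j = 0 then 0 else A 1 j)
  else if j = 0 then 0 else A i j

/-- The position in `ξ(x)` of the `n`-th letter of `x`, where `ξ` replaces
every symbol `1` by the word `(1,0)`. -/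
def posf (x : ℕ → ℕ) : ℕ → ℕ
  | 0 => 0
  | n + 1 => posf x n + (if x n = 1 then 2 else 1)

/-- The map `ξ : X_A → X_Ã` replacing every occurrence of the symbol `1`
by the word `(1,0)`. -/
noncomputable def xiMap (x : ℕ → ℕ) : ℕ → ℕ := fun m =>
  letI := Classical.dec (∃ n, posf x n = m)
  if h : ∃ n, posf x n = m then x h.choose else 0

/-- The map `η : X_Ã → X_A` deleting every occurrence of the symbol `0`. -/
noncomputable def etaMap (x : ℕ → ℕ) : ℕ → ℕ := fun m =>
  x (Nat.nth (fun i => x i ≠ 0) m)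

/-- The map `Ψ_ξ : C(X_Ã, ℤ) → C(X_A, ℤ)`. -/
noncomputable def PsiXi (f : (ℕ → ℕ) → ℤ) : (ℕ → ℕ) → ℤ := fun x =>
  if x 0 = 1 then f (xiMap x) + f (rawShift (xiMap x)) else f (xiMap x)

/-- The map `Ψ_η : C(X_A, ℤ) → C(X_Ã, ℤ)`. -/
noncomputable def PsiEta (f : (ℕ → ℕ) → ℤ) : (ℕ → ℕ) → ℤ := fun x =>
  if x 0 = 0 then 0 else f (etaMap x)


section Aux

open Classical

variable (x : ℕ → ℕ)

lemma posf_strictMono (y : ℕ → ℕ) : StrictMono (posf y) := by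
  apply strictMono_nat_of_lt_succ
  intro n
  simp only [posf]
  split <;> omega

lemma setOf_ne_zero_infinite (h00 : ∀ n, x n = 0 → x (n+1) ≠ 0) :
    {i | x i ≠ 0}.Infinite := by
  apply Set.infinite_of_forall_exists_gt
  intro a
  by_cases h : x (a+1) = 0
  · exact ⟨a + 2, h00 _ h, by omega⟩
  · exact ⟨a + 1, h, by omega⟩

lemma nth_eq_posf (hx0 : x 0 ≠ 0)
    (h10 : ∀ n, x n = 1 → x (n+1) = 0)
    (h01 : ∀ n, x (n+1) = 0 → x n = 1)
    (h00 : ∀ n, x n = 0 → x (n+1) ≠ 0) :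
    ∀ n, Nat.nth (fun i => x i ≠ 0) n = posf (etaMap x) n := by
  classical
  set p : ℕ → Prop := fun i => x i ≠ 0 with hp
  have hinf : (setOf p).Infinite := setOf_ne_zero_infinite x h00
  intro n
  induction n with
  | zero => simpa [posf] using Nat.nth_zero_of_zero (p := p) hx0
  | succ n ih =>
    have hmem : p (Nat.nth p n) := Nat.nth_mem_of_infinite hinf n
    have hcount : Nat.count p (Nat.nth p n) = n := Nat.count_nth_of_infinite hinf n
    have heta : etaMap x n = x (Nat.nth p n) := rfl
    simp only [posf, ← ih, heta]
    set i := Nat.nth p n with hi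
    by_cases h1 : x i = 1
    · have hz : x (i+1) = 0 := h10 _ h1
      have hnz : p (i+2) := h00 _ hz
      have : Nat.count p (i+2) = n + 1 := by
        rw [Nat.count_succ, Nat.count_succ, hcount]
        simp [hp, hmem, hz]; exact hmem
      have := Nat.nth_count (p := p) hnz
      rw [‹Nat.count p (i+2) = n + 1›] at this
      simp [h1, this]
    · have hnz : p (i+1) := fun h => h1 (h01 _ h)
      have : Nat.count p (i+1) = n + 1 := by
        rw [Nat.count_succ, hcount]; simp [hp, hmem]; exact hmem
      have := Nat.nth_count (p := p) hnz
      rw [‹Nat.count p (i+1) = n + 1›] at this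
      simp [h1, this]

lemma xiMap_etaMap (hx0 : x 0 ≠ 0)
    (h10 : ∀ n, x n = 1 → x (n+1) = 0)
    (h01 : ∀ n, x (n+1) = 0 → x n = 1)
    (h00 : ∀ n, x n = 0 → x (n+1) ≠ 0) :
    xiMap (etaMap x) = x := by
  classical
  set p : ℕ → Prop := fun i => x i ≠ 0 with hp
  have hkey := nth_eq_posf x hx0 h10 h01 h00
  funext m
  simp only [xiMap]
  split
  · next h =>
    have hc : posf (etaMap x) h.choose = m := h.choose_spec
    show etaMap x h.choose = x m
    rw [show etaMap x h.choose = x (Nat.nth p h.choose) from rfl, hkey, hc]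
  · next h =>
    by_contra hxm
    have hxm' : p m := fun hh => hxm hh.symm
    have := Nat.nth_count (p := p) hxm'
    exact h ⟨Nat.count p m, by rw [← hkey]; exact this⟩

end Aux

/-- `(Ψ_η ∘ Ψ_ξ)(𝔣) − 𝔣 = 𝔣₀∘σ_Ã − 𝔣₀` where `𝔣₀` agrees with `𝔣`
on points starting with `0` and vanishes elsewhere; consequently the difference
is a coboundary, so `Ψ_ξ` and `Ψ_η` induce mutually inverse isomorphisms
between `H^Ã` and `H^A`. -/
theorem PsiEta_PsiXi (N : ℕ) (A : ℕ → ℕ → ℕ)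
    (f : (ℕ → ℕ) → ℤ) (hf : ContinuousOn f (ShiftSpace0 N (expandAt1 A))) :
    (∀ x ∈ ShiftSpace0 N (expandAt1 A),
      PsiEta (PsiXi f) x - f x =
        (if rawShift x 0 = 0 then f (rawShift x) else 0) -
          (if x 0 = 0 then f x else 0)) ∧
    (∃ g : (ℕ → ℕ) → ℤ, ContinuousOn g (ShiftSpace0 N (expandAt1 A)) ∧
      ∀ x ∈ ShiftSpace0 N (expandAt1 A),
        PsiEta (PsiXi f) x - f x = g (rawShift x) - g x) :=  by
  classical
  set S := ShiftSpace0 N (expandAt1 A) with hS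
  have key : ∀ x ∈ S,
      PsiEta (PsiXi f) x - f x =
        (if rawShift x 0 = 0 then f (rawShift x) else 0) -
          (if x 0 = 0 then f x else 0) := by
    rintro x ⟨hb, hA⟩
    have h10 : ∀ n, x n = 1 → x (n+1) = 0 := by
      intro n h
      have := hA n
      rw [h] at this
      simp only [expandAt1, if_pos rfl] at this
      by_contra hne
      rw [if_neg hne] at this
      exact absurd this (by norm_num)
    have h01 : ∀ n, x (n+1) = 0 → x n = 1 := by
      intro n h
      have := hA n
      rw [h] at this
      by_contra hne
      simp only [expandAt1, if_neg hne] at this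
      rcases eq_or_ne (x n) 0 with h0 | h0 <;> simp [h0] at this
    have h00 : ∀ n, x n = 0 → x (n+1) ≠ 0 := by
      intro n h hc
      have := hA n
      rw [h, hc] at this
      simp [expandAt1] at this
    by_cases hx0 : x 0 = 0
    · have hx1 : x 1 ≠ 0 := h00 0 hx0
      simp [PsiEta, hx0, rawShift, hx1]
    · have hxi : xiMap (etaMap x) = x := xiMap_etaMap x hx0 h10 h01 h00
      have heta0 : etaMap x 0 = x 0 := by
        show x (Nat.nth (fun i => x i ≠ 0) 0) = x 0
        rw [Nat.nth_zero_of_zero hx0]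
      have hraw : rawShift x 0 = x 1 := rfl
      by_cases h1 : x 0 = 1
      · have hx1 : x 1 = 0 := h10 0 h1
        simp [PsiEta, PsiXi, hx0, heta0, h1, hxi, hraw, hx1]
      · have hx1 : x 1 ≠ 0 := fun h => h1 (h01 0 h)
        simp [PsiEta, PsiXi, hx0, heta0, h1, hxi, hraw, hx1]
  refine ⟨key, ⟨fun x => if x 0 = 0 then f x else 0, ?_, fun x hx => key x hx⟩⟩
  intro x hx
  by_cases h0 : x 0 = 0
  · have hU : {y : ℕ → ℕ | y 0 = 0} ∈ nhds x := by
      have : IsOpen {y : ℕ → ℕ | y 0 = 0} := by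
        have : Continuous fun y : ℕ → ℕ => y 0 := continuous_apply 0
        exact isOpen_discrete ({0} : Set ℕ) |>.preimage this
      exact this.mem_nhds h0
    refine ((hf x hx).congr_of_eventuallyEq ?_ (by simp [h0]))
    filter_upwards [nhdsWithin_le_nhds hU] with y hy
    simp [Set.mem_setOf_eq.mp hy]
  · have hU : {y : ℕ → ℕ | y 0 ≠ 0} ∈ nhds x := by
      have : IsOpen {y : ℕ → ℕ | y 0 ≠ 0} := by
        have : Continuous fun y : ℕ → ℕ => y 0 := continuous_apply 0
        exact (isOpen_discrete ({0}ᶜ : Set ℕ)).preimage this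
      exact this.mem_nhds h0
    refine ContinuousWithinAt.congr_of_eventuallyEq (continuousWithinAt_const (b := (0:ℤ))) ?_ (by simp [h0])
    filter_upwards [nhdsWithin_le_nhds hU] with y hy
    exact if_neg hy
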